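/- Let p be a tropical polynomial of degree n ≥ 1 with all coefficients a₀,…,aₙ ∈ ℝ finite, whose diagram is convex, i.e. the successive differences a_{i+1} − a_i are nondecreasing in i. Then p factors into linear tropical factors: there exist λ ∈ ℝ and r₁,…,rₙ ∈ ℝ such that, as formal tropical polynomials, p = λ ⊗ (r₁ ⊕ x) ⊗ (r₂ ⊕ x) ⊗ ⋯ ⊗ (rₙ ⊕ x). -/

import Mathlib

/-- Min-plus (tropical) convolution of coefficient sequences with values in
`ℝ ∪ {∞}` (missing coefficients are `∞ = ⊤`). -/
noncomputable def tconv (a b : ℕ → WithTop ℝ) (j : ℕ) : WithTop ℝ :=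
  (Finset.range (j + 1)).inf fun i => a i + b (j - i)

/-- The linear tropical polynomial `r ⊕ x`, with coefficient sequence `(r, 0)`. -/
noncomputable def linFactor (r : ℝ) : ℕ → WithTop ℝ := fun i =>
  if i = 0 then (r : WithTop ℝ) else if i = 1 then ((0 : ℝ) : WithTop ℝ) else ⊤

/-- The constant (degree-zero) tropical polynomial `λ`. -/
noncomputable def tmonomial (lam : ℝ) : ℕ → WithTop ℝ := fun i =>
  if i = 0 then (lam : WithTop ℝ) else ⊤

lemma tconv_lin_zero (r : ℝ) (q : ℕ → WithTop ℝ) :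
    tconv (linFactor r) q 0 = (r : WithTop ℝ) + q 0 := by
  simp [tconv, linFactor]

lemma tconv_lin_succ (r : ℝ) (q : ℕ → WithTop ℝ) (j : ℕ) :
    tconv (linFactor r) q (j + 1) = min ((r : WithTop ℝ) + q (j + 1)) (q j) := by
  unfold tconv
  apply le_antisymm
  · apply le_min
    · have h0 : (0:ℕ) ∈ Finset.range (j+1+1) := by simp
      have := Finset.inf_le (f := fun i => linFactor r i + q (j+1-i)) h0
      simpa [linFactor] using this
    · have h1 : (1:ℕ) ∈ Finset.range (j+1+1) := by simp
      have := Finset.inf_le (f := fun i => linFactor r i + q (j+1-i)) h1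
      simpa [linFactor] using this
  · apply Finset.le_inf
    intro i hi
    match i with
    | 0 => simpa [linFactor] using min_le_left ((r : WithTop ℝ) + q (j+1)) (q j)
    | 1 => simpa [linFactor] using min_le_right ((r : WithTop ℝ) + q (j+1)) (q j)
    | (k+2) => simp [linFactor]

lemma diff_mono (n : ℕ) (a : ℕ → ℝ)
    (hconv : ∀ i, i + 2 ≤ n → a (i + 1) - a i ≤ a (i + 2) - a (i + 1)) :
    ∀ j, j + 1 ≤ n → a 1 - a 0 ≤ a (j + 1) - a j := by
  intro j
  induction j with
  | zero => intro _; norm_num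
  | succ k ih =>
    intro h
    exact le_trans (ih (by omega)) (hconv k (by omega))

lemma aux_fold (n : ℕ) : ∀ (a : ℕ → ℝ),
    (∀ i, i + 2 ≤ n → a (i + 1) - a i ≤ a (i + 2) - a (i + 1)) →
    ∀ j : ℕ,
      (List.ofFn fun i : Fin n => linFactor (a i - a (i + 1))).foldr tconv (tmonomial (a n)) j
        = if j ≤ n then ((a j : ℝ) : WithTop ℝ) else ⊤ := by
  induction n with
  | zero =>
    intro a _ j
    cases j with
    | zero => simp [tmonomial]
    | succ k => simp [tmonomial]
  | succ n ih =>
    intro a hconv j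
    have hrest := ih (fun i => a (i + 1)) (fun i hi => hconv (i + 1) (by omega))
    rw [List.ofFn_succ]
    simp only [List.foldr_cons, Fin.val_succ, Fin.val_zero]
    cases j with
    | zero =>
      rw [tconv_lin_zero]
      have h0 := hrest 0
      rw [h0]
      simp only [Nat.zero_le, if_true]
      exact_mod_cast (by ring : a 0 - a (0+1) + a (0+1) = a 0)
    | succ k =>
      rw [tconv_lin_succ]
      have h1 := hrest (k + 1)
      have h2 := hrest k
      rw [h1, h2]
      by_cases hk : k + 1 ≤ n
      · rw [if_pos hk, if_pos (by omega : k ≤ n), if_pos (by omega : k + 1 ≤ n + 1)]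
        have hle : a (k + 1) ≤ (a 0 - a 1) + a (k + 1 + 1) := by
          have := diff_mono (n + 1) a hconv (k + 1) (by omega)
          linarith
        rw [min_eq_right (by exact_mod_cast hle)]
      · by_cases hk2 : k ≤ n
        · rw [if_neg hk, if_pos hk2, if_pos (by omega : k + 1 ≤ n + 1)]
          have hkn : k = n := by omega
          subst hkn
          simp
        · rw [if_neg hk, if_neg hk2, if_neg (by omega : ¬ k + 1 ≤ n + 1)]
          simp

/-- A tropical polynomial with finite coefficients whose diagram is convex factors
into linear tropical factors `λ ⊗ (r₁ ⊕ x) ⊗ ⋯ ⊗ (rₙ ⊕ x)`. -/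
theorem convex_factors_into_linear (n : ℕ) (hn : 1 ≤ n) (a : ℕ → ℝ)
    (hconvex : ∀ i, i + 2 ≤ n → a (i + 1) - a i ≤ a (i + 2) - a (i + 1)) :
    ∃ (lam : ℝ) (r : Fin n → ℝ), ∀ j : ℕ,
      (List.ofFn fun i : Fin n => linFactor (r i)).foldr tconv (tmonomial lam) j
        = if j ≤ n then ((a j : ℝ) : WithTop ℝ) else ⊤ := by
  exact ⟨a n, fun i : Fin n => a i - a (i + 1), aux_fold n a hconvex⟩
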